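/- For integers i and j with 0 ≤ j ≤ i-1, the polynomial A(i,j,t) satisfies the reciprocity t^{i+1} A(i, j, 1/t) = A(i, i-1-j, t). -/

import Mathlib

open Finset Polynomial

/-- The (N)-th finite difference of a polynomial of degree < N vanishes. -/
private lemma FD (N : ℕ) (P : Polynomial ℤ) (hP : P.degree < (N : ℕ)) (x : ℤ) :
    ∑ m ∈ Finset.range (N + 1), (-1 : ℤ) ^ m * (N.choose m) * P.eval (x - m) = 0 := by
  induction N generalizing P x with
  | zero =>
    have hP0 : P = 0 := by
      rw [← Polynomial.degree_eq_bot]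
      exact Nat.WithBot.lt_zero_iff.mp (by exact_mod_cast hP)
    simp [hP0]
  | succ N ih =>
    set Q : Polynomial ℤ := P.comp (X + 1) - P with hQdef
    have hQeval : ∀ y : ℤ, Q.eval y = P.eval (y + 1) - P.eval y := by
      intro y
      simp [hQdef, Polynomial.eval_comp]
    have hQdeg : Q.degree < (N : ℕ) := by
      rcases eq_or_ne P 0 with rfl | hP0
      · simpa [hQdef] using (by exact_mod_cast bot_lt_iff_ne_bot.mpr (by simp) : (⊥ : WithBot ℕ) < (N : ℕ))
      · have hx1 : (X + 1 : Polynomial ℤ).natDegree = 1 := by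
          simpa using Polynomial.natDegree_X_add_C (1 : ℤ)
        have hlead : (P.comp (X + 1)).leadingCoeff = P.leadingCoeff := by
          rw [Polynomial.leadingCoeff_comp (by rw [hx1]; norm_num)]
          have : (X + 1 : Polynomial ℤ).leadingCoeff = 1 := by
            simpa using Polynomial.leadingCoeff_X_add_C (1 : ℤ)
          rw [this, one_pow, mul_one]
        have hnd : (P.comp (X + 1)).natDegree = P.natDegree := by
          rw [Polynomial.natDegree_comp, hx1, mul_one]
        have hcomp0 : P.comp (X + 1) ≠ 0 := by
          intro h
          apply hP0
          have := hlead
          rw [h] at this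
          simpa [Polynomial.leadingCoeff_eq_zero] using this.symm
        have hdeq : (P.comp (X + 1)).degree = P.degree := by
          rw [Polynomial.degree_eq_natDegree hcomp0, Polynomial.degree_eq_natDegree hP0, hnd]
        have h1 : Q.degree < P.degree := hdeq ▸ Polynomial.degree_sub_lt hdeq hcomp0 hlead
        have h2 : P.degree ≤ (N : ℕ) := by
          have := hP
          rw [Polynomial.degree_eq_natDegree hP0] at this ⊢
          exact_mod_cast Nat.lt_succ_iff.mp (by exact_mod_cast this)
        exact lt_of_lt_of_le h1 h2
    -- sum manipulation
    have key : ∀ m : ℕ, (-1 : ℤ) ^ (m + 1) * ((N + 1).choose (m + 1)) * P.eval (x - (m + 1 : ℕ))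
        = (-1 : ℤ) ^ (m + 1) * (N.choose (m + 1)) * P.eval (x - (m + 1 : ℕ))
          - (-1 : ℤ) ^ m * (N.choose m) * P.eval (x - 1 - m) := by
      intro m
      have hc : (((N + 1).choose (m + 1) : ℤ)) = N.choose m + N.choose (m + 1) := by
        exact_mod_cast Nat.choose_succ_succ N m
      have harg : x - ((m : ℤ) + 1) = x - 1 - m := by ring
      rw [hc]
      push_cast
      rw [harg]
      ring
    have step1 : ∑ m ∈ Finset.range (N + 2), (-1 : ℤ) ^ m * ((N + 1).choose m) * P.eval (x - m)
        = ∑ m ∈ Finset.range (N + 1), ((-1 : ℤ) ^ (m + 1) * (N.choose (m + 1)) * P.eval (x - (m + 1 : ℕ))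
            - (-1 : ℤ) ^ m * (N.choose m) * P.eval (x - 1 - m))
          + 1 * P.eval x := by
      rw [Finset.sum_range_succ']
      simp only [key]
      norm_num
    rw [step1, Finset.sum_sub_distrib]
    have step2 : ∑ m ∈ Finset.range (N + 1), (-1 : ℤ) ^ (m + 1) * (N.choose (m + 1)) * P.eval (x - (m + 1 : ℕ))
        + 1 * P.eval x
        = ∑ m ∈ Finset.range (N + 1), (-1 : ℤ) ^ m * (N.choose m) * P.eval (x - m) := by
      have := Finset.sum_range_succ' (fun m => (-1 : ℤ) ^ m * (N.choose m) * P.eval (x - m)) (N + 1)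
      rw [Finset.sum_range_succ] at this
      simp only [Nat.choose_succ_self, Nat.cast_zero, mul_zero, zero_mul, add_zero] at this
      simpa using this.symm
    have goal2 : ∑ m ∈ Finset.range (N + 1), (-1 : ℤ) ^ m * (N.choose m) * P.eval (x - m)
        - ∑ m ∈ Finset.range (N + 1), (-1 : ℤ) ^ m * (N.choose m) * P.eval (x - 1 - m)
        = ∑ m ∈ Finset.range (N + 1), (-1 : ℤ) ^ m * (N.choose m) * Q.eval ((x - 1) - m) := by
      rw [← Finset.sum_sub_distrib]
      refine Finset.sum_congr rfl fun m _ => ?_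
      rw [hQeval]
      have : x - 1 - (m : ℤ) + 1 = x - m := by ring
      rw [this]
      ring
    linarith [step2, goal2, ih Q hQdeg (x - 1)]

private lemma coeff_one_sub_X_pow (N m : ℕ) :
    PowerSeries.coeff m ((1 - PowerSeries.X) ^ N)
      = if m ≤ N then (-1 : ℤ) ^ m * N.choose m else 0 := by
  have h : (1 - PowerSeries.X : PowerSeries ℤ) ^ N
      = ∑ k ∈ Finset.range (N + 1),
          PowerSeries.C ((-1 : ℤ) ^ k * N.choose k) * PowerSeries.X ^ k := by
    rw [sub_eq_add_neg, add_comm, add_pow]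
    refine Finset.sum_congr rfl fun k hk => ?_
    rw [one_pow, mul_one, neg_pow]
    rw [map_mul, map_pow, map_neg, map_one, map_natCast]
    ring
  rw [h, map_sum]
  simp only [PowerSeries.coeff_C_mul, PowerSeries.coeff_X_pow, mul_ite, mul_one, mul_zero]
  rw [Finset.sum_ite_eq (Finset.range (N + 1)) m (fun k => (-1 : ℤ) ^ k * N.choose k)]
  simp [Nat.lt_succ_iff]

private lemma coeff_mul_mk (N k : ℕ) (c : ℕ → ℤ) :
    PowerSeries.coeff k ((1 - PowerSeries.X) ^ N * PowerSeries.mk c)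
      = ∑ m ∈ Finset.range (k + 1),
          (if m ≤ N then (-1 : ℤ) ^ m * N.choose m else 0) * c (k - m) := by
  rw [PowerSeries.coeff_mul, Finset.Nat.sum_antidiagonal_eq_sum_range_succ
    (fun a b => PowerSeries.coeff a ((1 - PowerSeries.X) ^ N) * PowerSeries.coeff b (PowerSeries.mk c))]
  exact Finset.sum_congr rfl fun m _ => by rw [coeff_one_sub_X_pow, PowerSeries.coeff_mk]

/-- `A(i,j,t) = (1-t)^{i+2} ∑_{n≥0} t^n n^{j+1} (n+1)^{i-j}` for `i ≥ j ≥ 0`,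
as a formal power series. -/
noncomputable def Apoly (i j : ℕ) : PowerSeries ℤ :=
  (1 - PowerSeries.X) ^ (i + 2) *
    PowerSeries.mk (fun n : ℕ => (n : ℤ) ^ (j + 1) * ((n : ℤ) + 1) ^ (i - j))

private lemma degP (a b : ℕ) (hba : b ≤ a) :
    ((Polynomial.X ^ (b + 1) * (Polynomial.X + 1) ^ (a - b) : Polynomial ℤ)).degree
      < ((a + 2 : ℕ) : WithBot ℕ) := by
  have h1 : ((Polynomial.X + 1 : Polynomial ℤ)).degree = 1 := by
    simpa using Polynomial.degree_X_add_C (1 : ℤ)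
  rw [Polynomial.degree_mul, Polynomial.degree_pow, Polynomial.degree_pow, h1,
    Polynomial.degree_X]
  rw [nsmul_eq_mul, nsmul_eq_mul, mul_one, mul_one]
  norm_cast
  omega

private lemma evalP (a b : ℕ) (x : ℤ) :
    ((Polynomial.X ^ (b + 1) * (Polynomial.X + 1) ^ (a - b) : Polynomial ℤ)).eval x
      = x ^ (b + 1) * (x + 1) ^ (a - b) := by
  simp

private lemma coeff_vanish (a b k : ℕ) (hba : b ≤ a) (hk : a + 2 ≤ k) :
    PowerSeries.coeff k (Apoly a b) = 0 := by
  rw [Apoly, coeff_mul_mk]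
  have hsub : Finset.range (a + 3) ⊆ Finset.range (k + 1) := Finset.range_subset_range.mpr (by omega)
  rw [← Finset.sum_subset hsub (by
    intro m hm hnm
    simp only [Finset.mem_range] at hm hnm
    rw [if_neg (by omega), zero_mul])]
  have hFD := FD (a + 2) (Polynomial.X ^ (b + 1) * (Polynomial.X + 1) ^ (a - b)) (degP a b hba) (k : ℤ)
  rw [← hFD]
  refine Finset.sum_congr rfl fun m hm => ?_
  simp only [Finset.mem_range] at hm
  rw [if_pos (by omega), evalP]
  have hcast : ((k - m : ℕ) : ℤ) = (k : ℤ) - m := by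
    have : m ≤ k := by omega
    push_cast [this]
    ring
  rw [hcast]

private lemma sign_lemma (a b : ℕ) (h : (a + b) % 2 = 1) : (-1 : ℤ) ^ a = -(-1) ^ b := by
  have h1 : (-1 : ℤ) ^ (a + b) = -1 := Odd.neg_one_pow ⟨(a + b) / 2, by omega⟩
  have h2 : (-1 : ℤ) ^ b * (-1) ^ b = 1 := by
    rw [← pow_add]
    exact Even.neg_one_pow ⟨b, rfl⟩
  have h3 : (-1 : ℤ) ^ (a + b) * (-1) ^ b = (-1 : ℤ) ^ a := by
    rw [pow_add, mul_assoc, h2, mul_one]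
  rw [← h3, h1]
  ring

private lemma coeff_symm (i j k : ℕ) (hij : j + 1 ≤ i) (hk : k ≤ i + 1) :
    PowerSeries.coeff (i + 1 - k) (Apoly i j) = PowerSeries.coeff k (Apoly i (i - 1 - j)) := by
  have e1 : i - 1 - j + 1 = i - j := by omega
  have e2 : i - (i - 1 - j) = j + 1 := by omega
  -- left side
  have hL : PowerSeries.coeff (i + 1 - k) (Apoly i j)
      = ∑ r ∈ Finset.range (i + 2 - k),
          (-1 : ℤ) ^ (i + 1 - k - r) * ((i + 2).choose (i + 1 - k - r))
            * ((r : ℤ) ^ (j + 1) * ((r : ℤ) + 1) ^ (i - j)) := by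
    rw [Apoly, coeff_mul_mk]
    have hrange : i + 1 - k + 1 = i + 2 - k := by omega
    rw [hrange]
    rw [← Finset.sum_range_reflect]
    refine Finset.sum_congr rfl fun r hr => ?_
    simp only [Finset.mem_range] at hr
    have h1 : i + 2 - k - 1 - r = i + 1 - k - r := by omega
    have h2 : i + 1 - k - (i + 1 - k - r) = r := by omega
    rw [h1, h2, if_pos (by omega)]
  -- right side
  have hR : PowerSeries.coeff k (Apoly i (i - 1 - j))
      = ∑ r ∈ Finset.range (i + 2 - k),
          -((-1 : ℤ) ^ (k + 1 + r) * ((i + 2).choose (k + 1 + r))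
            * ((-1 - (r : ℤ)) ^ (i - j) * (-(r : ℤ)) ^ (j + 1))) := by
    set f : ℕ → ℤ := fun m => (-1 : ℤ) ^ m * ((i + 2).choose m)
      * ((Polynomial.X ^ (i - j) * (Polynomial.X + 1) ^ (j + 1) : Polynomial ℤ)).eval ((k : ℤ) - m)
      with hf
    have hdeg : ((Polynomial.X ^ (i - j) * (Polynomial.X + 1) ^ (j + 1) : Polynomial ℤ)).degree
        < ((i + 2 : ℕ) : WithBot ℕ) := by
      have h := degP i (i - j - 1) (by omega)
      have ha : i - j - 1 + 1 = i - j := by omega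
      have hb : i - (i - j - 1) = j + 1 := by omega
      rwa [ha, hb] at h
    have hFD : ∑ m ∈ Finset.range (i + 3), f m = 0 :=
      FD (i + 2) (Polynomial.X ^ (i - j) * (Polynomial.X + 1) ^ (j + 1)) hdeg (k : ℤ)
    have hsplit : (∑ m ∈ Finset.range (k + 1), f m) + ∑ m ∈ Finset.Ico (k + 1) (i + 3), f m
        = ∑ m ∈ Finset.range (i + 3), f m := by
      rw [Finset.range_eq_Ico, Finset.range_eq_Ico]
      exact Finset.sum_Ico_consecutive f (m := 0) (n := k + 1) (k := i + 3) (by omega) (by omega)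
    have hfront : PowerSeries.coeff k (Apoly i (i - 1 - j)) = ∑ m ∈ Finset.range (k + 1), f m := by
      rw [Apoly, coeff_mul_mk]
      simp only [e1, e2]
      refine Finset.sum_congr rfl fun m hm => ?_
      simp only [Finset.mem_range] at hm
      rw [if_pos (by omega), hf]
      have hcast : ((k - m : ℕ) : ℤ) = (k : ℤ) - m := by
        have hmk : m ≤ k := by omega
        push_cast [hmk]
        ring
      simp only [Polynomial.eval_mul, Polynomial.eval_pow, Polynomial.eval_add,
        Polynomial.eval_X, Polynomial.eval_one]
      rw [hcast]
    have htail : ∑ m ∈ Finset.Ico (k + 1) (i + 3), f m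
        = ∑ r ∈ Finset.range (i + 2 - k), f (k + 1 + r) := by
      rw [Finset.sum_Ico_eq_sum_range]
      have h3 : i + 3 - (k + 1) = i + 2 - k := by omega
      rw [h3]
    have hval : ∀ r : ℕ, f (k + 1 + r)
        = (-1 : ℤ) ^ (k + 1 + r) * ((i + 2).choose (k + 1 + r))
            * ((-1 - (r : ℤ)) ^ (i - j) * (-(r : ℤ)) ^ (j + 1)) := by
      intro r
      rw [hf]
      simp only [Polynomial.eval_mul, Polynomial.eval_pow, Polynomial.eval_add,
        Polynomial.eval_X, Polynomial.eval_one]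
      have harg : (k : ℤ) - ((k + 1 + r : ℕ) : ℤ) = -1 - r := by push_cast; ring
      have harg2 : (-1 - (r : ℤ)) + 1 = -(r : ℤ) := by ring
      rw [harg, harg2]
    rw [hfront]
    have : ∑ m ∈ Finset.range (k + 1), f m = -∑ r ∈ Finset.range (i + 2 - k), f (k + 1 + r) := by
      rw [← htail]
      linarith [hsplit, hFD]
    rw [this, ← Finset.sum_neg_distrib]
    exact Finset.sum_congr rfl fun r _ => by rw [hval r]
  rw [hL, hR]
  refine Finset.sum_congr rfl fun r hr => ?_
  simp only [Finset.mem_range] at hr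
  have hch : (i + 2).choose (i + 1 - k - r) = (i + 2).choose (k + 1 + r) := by
    have h := Nat.choose_symm (show k + 1 + r ≤ i + 2 by omega)
    have h4 : i + 2 - (k + 1 + r) = i + 1 - k - r := by omega
    rwa [h4] at h
  rw [hch]
  have hs : (-1 : ℤ) ^ (i + 1 - k - r) = -(-1) ^ ((k + 1 + r) + ((i - j) + (j + 1))) :=
    sign_lemma _ _ (by omega)
  rw [hs]
  have hn1 : (-1 - (r : ℤ)) ^ (i - j) = (-1) ^ (i - j) * (1 + (r : ℤ)) ^ (i - j) := by
    rw [show (-1 - (r : ℤ)) = -(1 + r) by ring, neg_pow]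
  have hn2 : (-(r : ℤ)) ^ (j + 1) = (-1) ^ (j + 1) * (r : ℤ) ^ (j + 1) := by rw [neg_pow]
  rw [hn1, hn2]
  ring

/-- For `0 ≤ j ≤ i-1`, the polynomial `A(i,j,t)` satisfies the reciprocity
`t^{i+1} A(i,j,1/t) = A(i,i-1-j,t)`. -/
theorem A_reciprocity (i j : ℕ) (hij : j + 1 ≤ i) :
    ∃ p : Polynomial ℤ, (p : PowerSeries ℤ) = Apoly i j ∧
      ((Polynomial.reflect (i + 1) p : Polynomial ℤ) : PowerSeries ℤ)
        = Apoly i (i - 1 - j) := by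
  refine ⟨PowerSeries.trunc (i + 2) (Apoly i j), ?_, ?_⟩
  · ext n
    rw [Polynomial.coeff_coe, PowerSeries.coeff_trunc]
    split_ifs with h
    · rfl
    · exact (coeff_vanish i j n (by omega) (by omega)).symm
  · ext n
    rw [Polynomial.coeff_coe, Polynomial.coeff_reflect, PowerSeries.coeff_trunc]
    by_cases h : n ≤ i + 1
    · rw [Polynomial.revAt_le h, if_pos (by omega)]
      exact coeff_symm i j n hij h
    · rw [Polynomial.revAt_eq_self_of_lt (by omega), if_neg (by omega)]
      exact (coeff_vanish i (i - 1 - j) n (by omega) (by omega)).symm
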